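/- Let k > 0 and α ∈ ℝ² with |αₙ| ≠ k for all n ∈ ℤ², and let (Ẽₙ)_{n∈ℤ²} ⊂ ℂ³ be tangential vectors (e₃·Ẽₙ = 0) with Σₙ (1+|αₙ|²)^{−1/2}(|Ẽₙ|² + |αₙ·Ẽₙ|²) < ∞. Then the series ⟨RẼ,Ẽ⟩ := 4π² Σ_{n∈ℤ²} R̂ₙ · conj(Ẽₙ), with R̂ₙ = −(1/(iβₙ))[k²Ẽₙ − (αₙ·Ẽₙ)αₙ], converges absolutely, and its real part is given by Re ⟨RẼ,Ẽ⟩ = 4π² Σ_{n∈ℤ²∖P} (1/|βₙ|) [ k²|Ẽₙ|² − |αₙ·Ẽₙ|² ]. -/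

import Mathlib

open scoped Real

/-- `|αₙ|` for `αₙ = (α₁+n₁, α₂+n₂, 0)`. -/
noncomputable def alphaNorm (α : ℝ × ℝ) (n : ℤ × ℤ) : ℝ :=
  Real.sqrt ((α.1 + (n.1 : ℝ))^2 + (α.2 + (n.2 : ℝ))^2)

/-- The vector `αₙ = (α₁+n₁, α₂+n₂, 0)` viewed in `ℂ³`. -/
noncomputable def alphaVec (α : ℝ × ℝ) (n : ℤ × ℤ) : Fin 3 → ℂ :=
  ![((α.1 + (n.1 : ℝ) : ℝ) : ℂ), ((α.2 + (n.2 : ℝ) : ℝ) : ℂ), 0]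

/-- The vertical wavenumbers `βₙ` of the Rayleigh expansion:
`βₙ = (k² − |αₙ|²)^{1/2}` if `|αₙ| < k` and `βₙ = i(|αₙ|² − k²)^{1/2}` if `|αₙ| > k`. -/
noncomputable def betaN (k : ℝ) (α : ℝ × ℝ) (n : ℤ × ℤ) : ℂ :=
  if alphaNorm α n < k then (Real.sqrt (k^2 - (alphaNorm α n)^2) : ℂ)
  else Complex.I * (Real.sqrt ((alphaNorm α n)^2 - k^2) : ℂ)

/-- Bilinear dot product on `ℂ³` (no conjugation). -/
def cdot (a b : Fin 3 → ℂ) : ℂ := a 0 * b 0 + a 1 * b 1 + a 2 * b 2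

/-- Hermitian pairing `a · conj b` on `ℂ³`. -/
noncomputable def hpair (a b : Fin 3 → ℂ) : ℂ := ∑ j : Fin 3, a j * (starRingEnd ℂ) (b j)

/-- Squared Euclidean norm `|v|² = Σⱼ|vⱼ|²` of `v ∈ ℂ³`. -/
noncomputable def enormSq (v : Fin 3 → ℂ) : ℝ := ∑ j : Fin 3, ‖v j‖^2

/-- The Fourier symbol `R̂ₙ = −(1/(iβₙ))[k²Ẽₙ − (αₙ·Ẽₙ)αₙ]` of the transparent
boundary (Dirichlet-to-Neumann) operator `R`. -/
noncomputable def Rsymb (k : ℝ) (α : ℝ × ℝ) (n : ℤ × ℤ) (En : Fin 3 → ℂ) : Fin 3 → ℂ :=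
  fun j => -(1 / (Complex.I * betaN k α n)) *
    ((k : ℂ)^2 * En j - cdot (alphaVec α n) En * alphaVec α n j)

/-- The Sobolev weight `(1+|αₙ|²)^{−1/2}`. -/
noncomputable def sw (α : ℝ × ℝ) (n : ℤ × ℤ) : ℝ := 1 / Real.sqrt (1 + (alphaNorm α n)^2)

lemma alphaVec_conj (α : ℝ × ℝ) (n : ℤ × ℤ) (j : Fin 3) :
    (starRingEnd ℂ) (alphaVec α n j) = alphaVec α n j := by
  fin_cases j <;> simp [alphaVec]

lemma hpair_Rsymb (k : ℝ) (α : ℝ × ℝ) (n : ℤ × ℤ) (E : Fin 3 → ℂ) :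
    hpair (Rsymb k α n E) E
      = -(1/(Complex.I * betaN k α n)) *
        ((k^2 * enormSq E - ‖cdot (alphaVec α n) E‖^2 : ℝ) : ℂ) := by
  have h1 : ∀ z : ℂ, z * (starRingEnd ℂ) z = ((‖z‖ : ℝ) : ℂ) ^ 2 := by
    intro z; rw [Complex.mul_conj]; norm_cast; exact (Complex.sq_norm z).symm
  have hd := h1 (cdot (alphaVec α n) E)
  simp only [hpair, Rsymb, enormSq, Fin.sum_univ_three]
  push_cast
  rw [← h1 (E 0), ← h1 (E 1), ← h1 (E 2)]
  rw [show (cdot (alphaVec α n) E) = alphaVec α n 0 * E 0 + alphaVec α n 1 * E 1 + alphaVec α n 2 * E 2 from rfl] at hd ⊢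
  simp only [map_add, map_mul, alphaVec_conj] at hd
  linear_combination (1/(Complex.I * betaN k α n)) * hd

lemma alphaNorm_nonneg (α : ℝ × ℝ) (n : ℤ × ℤ) : 0 ≤ alphaNorm α n := Real.sqrt_nonneg _

lemma alphaNorm_sq (α : ℝ × ℝ) (n : ℤ × ℤ) :
    alphaNorm α n ^ 2 = (α.1 + (n.1:ℝ))^2 + (α.2 + (n.2:ℝ))^2 :=
  Real.sq_sqrt (by positivity)

lemma hpair_lt (k : ℝ) (hk : 0 < k) (α : ℝ × ℝ) (n : ℤ × ℤ) (E : Fin 3 → ℂ)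
    (h : alphaNorm α n < k) :
    hpair (Rsymb k α n E) E
      = Complex.I * (((1 / Real.sqrt (k^2 - (alphaNorm α n)^2)) *
          (k^2 * enormSq E - ‖cdot (alphaVec α n) E‖^2) : ℝ) : ℂ) := by
  have hb : 0 < Real.sqrt (k^2 - (alphaNorm α n)^2) := by
    apply Real.sqrt_pos.mpr
    nlinarith [alphaNorm_nonneg α n]
  rw [hpair_Rsymb, betaN, if_pos h]
  set b := Real.sqrt (k^2 - (alphaNorm α n)^2)
  set c := k^2 * enormSq E - ‖cdot (alphaVec α n) E‖^2
  have hbne : (b:ℂ) ≠ 0 := by exact_mod_cast hb.ne'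
  push_cast
  field_simp
  ring_nf
  simp [Complex.I_sq]

lemma alphaNorm_gt {k : ℝ} {α : ℝ × ℝ} (hwood : ∀ n : ℤ × ℤ, alphaNorm α n ≠ k)
    {n : ℤ × ℤ} (h : ¬ alphaNorm α n < k) : k < alphaNorm α n :=
  lt_of_le_of_ne (not_lt.mp h) (hwood n).symm

lemma abs_betaN_gt {k : ℝ} {α : ℝ × ℝ} {n : ℤ × ℤ} (h : k < alphaNorm α n) (hk : 0 < k) :
    ‖betaN k α n‖ = Real.sqrt ((alphaNorm α n)^2 - k^2) := by
  rw [betaN, if_neg (not_lt.mpr h.le)]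
  rw [norm_mul, Complex.norm_I, Complex.norm_real, Real.norm_eq_abs, one_mul]
  exact abs_of_nonneg (Real.sqrt_nonneg _)

lemma hpair_gt (k : ℝ) (hk : 0 < k) (α : ℝ × ℝ) (n : ℤ × ℤ) (E : Fin 3 → ℂ)
    (h : k < alphaNorm α n) :
    hpair (Rsymb k α n E) E
      = (((1 / ‖betaN k α n‖) *
          (k^2 * enormSq E - ‖cdot (alphaVec α n) E‖^2) : ℝ) : ℂ) := by
  have hb : 0 < Real.sqrt ((alphaNorm α n)^2 - k^2) := by
    apply Real.sqrt_pos.mpr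
    nlinarith [alphaNorm_nonneg α n]
  rw [hpair_Rsymb, abs_betaN_gt h hk, betaN, if_neg (not_lt.mpr h.le)]
  set b := Real.sqrt ((alphaNorm α n)^2 - k^2)
  set c := k^2 * enormSq E - ‖cdot (alphaVec α n) E‖^2
  have hbne : (b:ℂ) ≠ 0 := by exact_mod_cast hb.ne'
  push_cast
  field_simp
  ring_nf
  simp [Complex.I_sq]

lemma abs_betaN_lt {k : ℝ} {α : ℝ × ℝ} {n : ℤ × ℤ} (h : alphaNorm α n < k) :
    ‖betaN k α n‖ = Real.sqrt (k^2 - (alphaNorm α n)^2) := by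
  rw [betaN, if_pos h, Complex.norm_real, Real.norm_eq_abs, abs_of_nonneg (Real.sqrt_nonneg _)]

lemma enormSq_nonneg (v : Fin 3 → ℂ) : 0 ≤ enormSq v := by
  unfold enormSq; positivity

lemma abs_hpair (k : ℝ) (hk : 0 < k) (α : ℝ × ℝ)
    (hwood : ∀ n : ℤ × ℤ, alphaNorm α n ≠ k) (n : ℤ × ℤ) (E : Fin 3 → ℂ) :
    ‖hpair (Rsymb k α n E) E‖
      = (1 / ‖betaN k α n‖) *
          |k^2 * enormSq E - ‖cdot (alphaVec α n) E‖^2| := by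
  by_cases h : alphaNorm α n < k
  · rw [hpair_lt k hk α n E h, norm_mul, Complex.norm_I, one_mul, Complex.norm_real, Real.norm_eq_abs,
      abs_mul, abs_betaN_lt h]
    congr 1
    rw [abs_of_nonneg (by positivity)]
  · have h' := alphaNorm_gt hwood h
    rw [hpair_gt k hk α n E h', Complex.norm_real, Real.norm_eq_abs, abs_mul,
      abs_of_nonneg (by positivity)]

set_option maxHeartbeats 1000000 in
/-- Absolute convergence of the D-to-N pairing `⟨RẼ,Ẽ⟩ = 4π² Σₙ R̂ₙ·conj(Ẽₙ)` for
tangential `Ẽₙ` with finite `H_t^{-1/2}(div)` norm, and the formula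
`Re⟨RẼ,Ẽ⟩ = 4π² Σ_{n∉P} (1/|βₙ|)[k²|Ẽₙ|² − |αₙ·Ẽₙ|²]` for its real part. -/
theorem re_pairing_formula (k : ℝ) (hk : 0 < k) (α : ℝ × ℝ)
    (hwood : ∀ n : ℤ × ℤ, alphaNorm α n ≠ k)
    (Et : ℤ × ℤ → Fin 3 → ℂ) (htan : ∀ n, Et n 2 = 0)
    (hsum : Summable fun n : ℤ × ℤ =>
      sw α n * (enormSq (Et n) + ‖cdot (alphaVec α n) (Et n)‖^2)) :
    (Summable fun n : ℤ × ℤ => ‖hpair (Rsymb k α n (Et n)) (Et n)‖) ∧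
    (Summable fun n : {n : ℤ × ℤ // ¬ alphaNorm α n < k} =>
      (1 / ‖betaN k α n.1‖) *
        (k^2 * enormSq (Et n.1) - ‖cdot (alphaVec α n.1) (Et n.1)‖^2)) ∧
    ((4 * (π : ℂ)^2) * ∑' n : ℤ × ℤ, hpair (Rsymb k α n (Et n)) (Et n)).re
      = 4 * π^2 * ∑' n : {n : ℤ × ℤ // ¬ alphaNorm α n < k},
          (1 / ‖betaN k α n.1‖) *
            (k^2 * enormSq (Et n.1) - ‖cdot (alphaVec α n.1) (Et n.1)‖^2) := by
  set S : Set (ℤ × ℤ) := {n | (alphaNorm α n)^2 ≤ k^2 + 1} with hSdef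
  -- finiteness of S
  have hS : S.Finite := by
    set r := Real.sqrt (k^2 + 1) with hr
    apply Set.Finite.subset
      (((Set.finite_Icc (⌈-α.1 - r⌉) (⌊-α.1 + r⌋)).prod
        (Set.finite_Icc (⌈-α.2 - r⌉) (⌊-α.2 + r⌋))))
    intro n hn
    simp only [hSdef, Set.mem_setOf_eq, alphaNorm_sq] at hn
    have h1 : (α.1 + (n.1:ℝ))^2 ≤ k^2 + 1 := by nlinarith [sq_nonneg (α.2 + (n.2:ℝ))]
    have h2 : (α.2 + (n.2:ℝ))^2 ≤ k^2 + 1 := by nlinarith [sq_nonneg (α.1 + (n.1:ℝ))]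
    have e1 : |α.1 + (n.1:ℝ)| ≤ r := by
      rw [← Real.sqrt_sq_eq_abs]; exact Real.sqrt_le_sqrt h1
    have e2 : |α.2 + (n.2:ℝ)| ≤ r := by
      rw [← Real.sqrt_sq_eq_abs]; exact Real.sqrt_le_sqrt h2
    obtain ⟨e1a, e1b⟩ := abs_le.mp e1
    obtain ⟨e2a, e2b⟩ := abs_le.mp e2
    refine ⟨⟨Int.ceil_le.mpr (by push_cast; linarith), Int.le_floor.mpr (by push_cast; linarith)⟩,
      ⟨Int.ceil_le.mpr (by push_cast; linarith), Int.le_floor.mpr (by push_cast; linarith)⟩⟩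
  -- pointwise bound off S
  have hbound : ∀ n ∉ S,
      ‖hpair (Rsymb k α n (Et n)) (Et n)‖
        ≤ (Real.sqrt (2 + 2*k^2) * max (k^2) 1) *
            (sw α n * (enormSq (Et n) + ‖cdot (alphaVec α n) (Et n)‖^2)) := by
    intro n hn
    have ht : k^2 + 1 < (alphaNorm α n)^2 := not_le.mp hn
    have hkn : k < alphaNorm α n :=
      lt_of_pow_lt_pow_left₀ 2 (alphaNorm_nonneg α n) (by nlinarith)
    have hbpos : 0 < Real.sqrt ((alphaNorm α n)^2 - k^2) :=
      Real.sqrt_pos.mpr (by nlinarith)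
    have h1t : 0 < Real.sqrt (1 + (alphaNorm α n)^2) := Real.sqrt_pos.mpr (by positivity)
    have he := enormSq_nonneg (Et n)
    have hd : (0:ℝ) ≤ ‖cdot (alphaVec α n) (Et n)‖^2 := by positivity
    have hA : |k^2 * enormSq (Et n) - ‖cdot (alphaVec α n) (Et n)‖^2|
        ≤ max (k^2) 1 * (enormSq (Et n) + ‖cdot (alphaVec α n) (Et n)‖^2) := by
      rw [abs_le]
      constructor <;> nlinarith [le_max_left (k^2) (1:ℝ), le_max_right (k^2) (1:ℝ)]
    have hB : 1 / Real.sqrt ((alphaNorm α n)^2 - k^2) ≤ Real.sqrt (2 + 2*k^2) * sw α n := by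
      rw [sw, mul_one_div, div_le_div_iff₀ hbpos h1t, one_mul]
      calc Real.sqrt (1 + (alphaNorm α n)^2)
          ≤ Real.sqrt ((2 + 2*k^2) * ((alphaNorm α n)^2 - k^2)) := by
            apply Real.sqrt_le_sqrt; nlinarith
        _ = Real.sqrt (2 + 2*k^2) * Real.sqrt ((alphaNorm α n)^2 - k^2) :=
            Real.sqrt_mul (by positivity) _
    rw [abs_hpair k hk α hwood n (Et n), abs_betaN_gt hkn hk]
    calc (1 / Real.sqrt ((alphaNorm α n)^2 - k^2)) *
          |k^2 * enormSq (Et n) - ‖cdot (alphaVec α n) (Et n)‖^2|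
        ≤ (Real.sqrt (2 + 2*k^2) * sw α n) *
            (max (k^2) 1 * (enormSq (Et n) + ‖cdot (alphaVec α n) (Et n)‖^2)) := by
          apply mul_le_mul hB hA (abs_nonneg _)
          have : (0:ℝ) ≤ sw α n := by rw [sw]; positivity
          positivity
      _ = (Real.sqrt (2 + 2*k^2) * max (k^2) 1) *
            (sw α n * (enormSq (Et n) + ‖cdot (alphaVec α n) (Et n)‖^2)) := by ring
  -- first summability
  have h1 : Summable fun n : ℤ × ℤ => ‖hpair (Rsymb k α n (Et n)) (Et n)‖ := by
    have hmaj : Summable fun m : ↥Sᶜ =>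
        (Real.sqrt (2 + 2*k^2) * max (k^2) 1) *
          (sw α m.1 * (enormSq (Et m.1) + ‖cdot (alphaVec α m.1) (Et m.1)‖^2)) :=
      (hsum.subtype _).mul_left _
    rw [← hS.summable_compl_iff]
    exact Summable.of_nonneg_of_le (fun m => norm_nonneg _)
      (fun m => hbound m.1 m.2) hmaj
  refine ⟨h1, ?_, ?_⟩
  -- second summability
  · apply Summable.of_norm_bounded (h1.subtype {n | ¬ alphaNorm α n < k})
    intro m
    rw [Real.norm_eq_abs, Function.comp_apply,
      hpair_gt k hk α m.1 (Et m.1) (alphaNorm_gt hwood m.2), Complex.norm_real, Real.norm_eq_abs]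
  -- real part formula
  · have hsc : Summable fun n : ℤ × ℤ => hpair (Rsymb k α n (Et n)) (Et n) := by
      apply Summable.of_norm
      simpa using h1
    have hre0 : ∀ n : ℤ × ℤ, alphaNorm α n < k →
        (hpair (Rsymb k α n (Et n)) (Et n)).re = 0 := by
      intro n h
      rw [hpair_lt k hk α n (Et n) h, Complex.mul_re, Complex.I_re, Complex.I_im,
        Complex.ofReal_im]
      ring
    have hre1 : ∀ n : ℤ × ℤ, ¬ alphaNorm α n < k →
        (hpair (Rsymb k α n (Et n)) (Et n)).re
          = (1 / ‖betaN k α n‖) *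
              (k^2 * enormSq (Et n) - ‖cdot (alphaVec α n) (Et n)‖^2) := by
      intro n h
      rw [hpair_gt k hk α n (Et n) (alphaNorm_gt hwood h)]
      exact Complex.ofReal_re _
    have hsupp : Function.support
        (fun n : ℤ × ℤ => (hpair (Rsymb k α n (Et n)) (Et n)).re)
          ⊆ {n | ¬ alphaNorm α n < k} := by
      intro n hn
      simp only [Set.mem_setOf_eq]
      intro h
      exact hn (hre0 n h)
    rw [show (4 * (π:ℂ)^2) = ((4 * π^2 : ℝ) : ℂ) by push_cast; ring,
      Complex.re_ofReal_mul, Complex.re_tsum hsc]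
    congr 1
    rw [← tsum_subtype_eq_of_support_subset hsupp]
    exact tsum_congr fun x => hre1 x.1 x.2
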